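/- The map Δ(ρ) = ½(ρ + ρ^T), where T is transposition in a fixed orthonormal basis, is a resource-destroying map for imaginarity (Δ(ρ) is a real density matrix for all states ρ, and Δ(σ) = σ for real σ), but it is not completely positive: there exists a state ρ on C ⊗ A such that (id_C ⊗ Δ)(ρ) is not positive semidefinite. -/

import Mathlib

open Matrix BigOperators ComplexOrder

noncomputable section

def IsDensity {n : Type*} [Fintype n] [DecidableEq n] (ρ : Matrix n n ℂ) : Prop :=
  ρ.PosSemidef ∧ ρ.trace = 1

/-- The resource-destroying map for imaginarity: `Δ(ρ) = ½(ρ + ρᵀ)`. -/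
def imagRD {d : ℕ} (ρ : Matrix (Fin d) (Fin d) ℂ) : Matrix (Fin d) (Fin d) ℂ :=
  (1 / 2 : ℝ) • (ρ + ρ.transpose)

lemma psd_half_smul {n : Type*} [Fintype n] {A : Matrix n n ℂ} (h : A.PosSemidef) :
    ((1 / 2 : ℝ) • A).PosSemidef := by
  refine Matrix.PosSemidef.of_dotProduct_mulVec_nonneg ?_ fun x => ?_
  · unfold Matrix.IsHermitian
    rw [conjTranspose_smul, h.1, star_trivial]
  · rw [smul_mulVec, dotProduct_smul, Complex.real_smul]
    refine mul_nonneg ?_ (h.dotProduct_mulVec_nonneg x)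
    rw [Complex.zero_le_real]; norm_num

lemma part1 {d : ℕ} (ρ : Matrix (Fin d) (Fin d) ℂ) (hρ : IsDensity ρ) :
    IsDensity (imagRD ρ) ∧ ∀ i j, ((imagRD ρ) i j).im = 0 := by
  obtain ⟨hpsd, htr⟩ := hρ
  refine ⟨⟨psd_half_smul (hpsd.add hpsd.transpose), ?_⟩, fun i j => ?_⟩
  · rw [imagRD, trace_smul, trace_add, trace_transpose, htr, Complex.real_smul]
    norm_num
  · have h : ρ j i = star (ρ i j) := by rw [hpsd.1.apply]
    simp only [imagRD, Matrix.smul_apply, Matrix.add_apply, Matrix.transpose_apply, h,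
      Complex.real_smul, Complex.mul_im]
    simp [Complex.add_im, Complex.conj_im]

lemma part2 {d : ℕ} (σ : Matrix (Fin d) (Fin d) ℂ) (hσ : IsDensity σ)
    (hre : ∀ i j, (σ i j).im = 0) : imagRD σ = σ := by
  have hT : σ.transpose = σ := by
    ext i j
    have h : σ j i = star (σ i j) := by rw [hσ.1.1.apply]
    rw [transpose_apply, h]
    exact Complex.conj_eq_iff_im.mpr (hre i j)
  rw [imagRD, hT]
  ext i j
  simp [Complex.real_smul]
  ring


lemma outer_psd {n : Type*} [Fintype n] [DecidableEq n] (φ : n → ℂ) :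
    (Matrix.of fun p q => (2:ℂ)⁻¹ * (φ p * (starRingEnd ℂ) (φ q)) : Matrix n n ℂ).PosSemidef := by
  refine Matrix.PosSemidef.of_dotProduct_mulVec_nonneg ?_ fun x => ?_
  · unfold Matrix.IsHermitian
    ext p q
    simp only [conjTranspose_apply, of_apply, star_mul', _root_.map_mul, Complex.conj_conj,
      Complex.star_def, map_inv₀, map_ofNat]
    ring
  · have key : star x ⬝ᵥ (Matrix.of fun p q => (2:ℂ)⁻¹ * (φ p * (starRingEnd ℂ) (φ q)) :
          Matrix n n ℂ) *ᵥ x =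
        (2:ℂ)⁻¹ * ((∑ p, (starRingEnd ℂ) (x p) * φ p) * ∑ q, (starRingEnd ℂ) (φ q) * x q) := by
      simp only [dotProduct, mulVec, of_apply, Finset.mul_sum, Finset.sum_mul,
        Pi.star_apply, Complex.star_def]
      rw [Finset.sum_comm]
      refine Finset.sum_congr rfl fun p _ => Finset.sum_congr rfl fun q _ => by ring
    rw [key]
    have hconj : (∑ q, (starRingEnd ℂ) (φ q) * x q)
        = (starRingEnd ℂ) (∑ p, (starRingEnd ℂ) (x p) * φ p) := by
      rw [map_sum]
      exact Finset.sum_congr rfl fun p _ => by simp [mul_comm]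
    rw [hconj, Complex.mul_conj]
    rw [show ((2:ℂ)⁻¹ = ((2⁻¹:ℝ):ℂ)) by norm_num, ← Complex.ofReal_mul, Complex.zero_le_real]
    exact mul_nonneg (by norm_num) (Complex.normSq_nonneg _)

lemma part3 {d : ℕ} (hd : 2 ≤ d) :
    ∃ (c : ℕ) (ρ : Matrix (Fin c × Fin d) (Fin c × Fin d) ℂ),
      (ρ.PosSemidef ∧ ρ.trace = 1) ∧
      ¬ Matrix.PosSemidef
        ((1 / 2 : ℝ) • (ρ + Matrix.of fun p q => ρ (p.1, q.2) (q.1, p.2))) := by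
  set e0 : Fin d := ⟨0, by omega⟩ with he0
  set e1 : Fin d := ⟨1, by omega⟩ with he1
  have hee : e0 ≠ e1 := by simp [he0, he1, Fin.ext_iff]
  set P0 : Fin 2 × Fin d := (0, e0) with hP0
  set P1 : Fin 2 × Fin d := (1, e1) with hP1
  set φ : Fin 2 × Fin d → ℂ := fun p => if p = P0 then 1 else if p = P1 then 1 else 0 with hφ
  set ρ : Matrix (Fin 2 × Fin d) (Fin 2 × Fin d) ℂ :=
    Matrix.of fun p q => (2:ℂ)⁻¹ * (φ p * (starRingEnd ℂ) (φ q)) with hρ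
  refine ⟨2, ρ, ⟨outer_psd φ, ?_⟩, ?_⟩
  · -- trace
    have hφφ : ∀ p, φ p * (starRingEnd ℂ) (φ p)
        = (if p = P0 then 1 else 0) + (if p = P1 then 1 else 0) := by
      intro p
      by_cases h0 : p = P0
      · simp [hφ, h0, hP0, hP1, Prod.ext_iff, hee]
      · have hne : P1 ≠ P0 := by simp [hP0, hP1, Prod.ext_iff, hee.symm]
        by_cases h1 : p = P1 <;> simp [hφ, h0, h1, hne]
    simp only [Matrix.trace, Matrix.diag, hρ, of_apply, hφφ, mul_add, Finset.sum_add_distrib,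
      mul_ite, mul_one, mul_zero, Finset.sum_ite_eq', Finset.mem_univ, if_true]
    norm_num
  · -- not PosSemidef
    intro h
    set v : Fin 2 × Fin d → ℂ :=
      fun p => (if p = (0, e1) then 1 else 0) - (if p = (1, e0) then 1 else 0) with hv
    have := h.dotProduct_mulVec_nonneg v
    set M := ((1 / 2 : ℝ) • (ρ + Matrix.of fun p q => ρ (p.1, q.2) (q.1, p.2))) with hM
    have hmv : ∀ p, (M *ᵥ v) p = M p (0, e1) - M p (1, e0) := by
      intro p
      simp [mulVec, dotProduct, hv, mul_sub, Finset.sum_sub_distrib, mul_ite, mul_one, mul_zero,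
        Finset.sum_ite_eq', Finset.mem_univ]
    have hform : star v ⬝ᵥ M *ᵥ v =
        (M (0, e1) (0, e1) - M (0, e1) (1, e0)) - (M (1, e0) (0, e1) - M (1, e0) (1, e0)) := by
      simp only [dotProduct, hmv, Pi.star_apply, hv]
      simp [sub_mul, Finset.sum_sub_distrib, ite_mul, one_mul, zero_mul,
        Finset.sum_ite_eq', Finset.mem_univ, star_sub, apply_ite (starRingEnd ℂ)]
      simp only [← hv, hmv]
    have hentries : star v ⬝ᵥ M *ᵥ v = -(2:ℂ)⁻¹ := by
      rw [hform, hM]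
      simp only [Matrix.smul_apply, Matrix.add_apply, of_apply, hρ, hφ]
      have h01 : ((0:Fin 2), e1) ≠ P0 := by simp [hP0, hee.symm, Prod.ext_iff]
      have h02 : ((0:Fin 2), e1) ≠ P1 := by simp [hP1, Prod.ext_iff]
      have h11 : ((1:Fin 2), e0) ≠ P0 := by simp [hP0, Prod.ext_iff]
      have h12 : ((1:Fin 2), e0) ≠ P1 := by simp [hP1, hee, Prod.ext_iff]
      simp only [h01, h02, h11, h12, if_false, if_neg]
      norm_num [hP0, hP1, Complex.real_smul]
    rw [hentries] at this
    rw [show (-(2:ℂ)⁻¹ = ((-2⁻¹:ℝ):ℂ)) by norm_num, Complex.zero_le_real] at this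
    norm_num at this

/-- `Δ(ρ) = ½(ρ + ρᵀ)` is a resource-destroying map for imaginarity
(it outputs a real density matrix on every state and fixes real states), but it is not
completely positive: `id_C ⊗ Δ` (which is `ρ ↦ ½(ρ + ρ^{T_A})`, with the partial
transpose on `A`) fails to preserve positivity. -/
theorem imaginarity_RD_map_not_CP {d : ℕ} (hd : 2 ≤ d) :
    (∀ ρ : Matrix (Fin d) (Fin d) ℂ, IsDensity ρ →
      IsDensity (imagRD ρ) ∧ ∀ i j, ((imagRD ρ) i j).im = 0) ∧
    (∀ σ : Matrix (Fin d) (Fin d) ℂ, IsDensity σ → (∀ i j, (σ i j).im = 0) →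
      imagRD σ = σ) ∧
    (∃ (c : ℕ) (ρ : Matrix (Fin c × Fin d) (Fin c × Fin d) ℂ), IsDensity ρ ∧
      ¬ Matrix.PosSemidef
        ((1 / 2 : ℝ) • (ρ + Matrix.of fun p q => ρ (p.1, q.2) (q.1, p.2)))) := by
  exact ⟨part1, part2, part3 hd⟩
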